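/- Given a very-well-behaved lens (S, V, g : S → V, p : S × V → S) in a category with finite products, the tuple with Put := p, Get := ⟨id_S, g⟩ : S → S × V, magma := second projection π₂ : V × V → V, and comagma := diagonal δ_V : V → V × V forms a strong update structure (satisfies PutPut, GetGet, PutGet, GetPut). -/

import Mathlib

open CategoryTheory CategoryTheory.Limits

/-- A very-well-behaved lens defines a strong update structure with Put := p,
Get := ⟨id, g⟩, magma := π₂ and comagma := the diagonal. -/
theorem vwb_lens_is_update_structure {C : Type*} [Category C] [HasFiniteProducts C]
    (S V : C) (g : S ⟶ V) (p : S ⨯ V ⟶ S)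
    (hPutPut : prod.map p (𝟙 V) ≫ p = prod.map prod.fst (𝟙 V) ≫ p)
    (hPutGet : p ≫ g = prod.snd)
    (hGetPut : prod.lift (𝟙 S) g ≫ p = 𝟙 S) :
    -- PutPut for the update structure, with magma π₂
    (prod.map p (𝟙 V) ≫ p
      = (prod.associator S V V).hom ≫ prod.map (𝟙 S) prod.snd ≫ p) ∧
    -- GetGet, with comagma the diagonal
    (prod.lift (𝟙 S) g ≫ prod.map (prod.lift (𝟙 S) g) (𝟙 V)
      = prod.lift (𝟙 S) g ≫ prod.map (𝟙 S) (diag V) ≫ (prod.associator S V V).inv) ∧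
    -- PutGet
    (p ≫ prod.lift (𝟙 S) g
      = prod.map (𝟙 S) (diag V) ≫ (prod.associator S V V).inv ≫ prod.map p (𝟙 V)) ∧
    -- GetPut
    (prod.lift (𝟙 S) g ≫ p = 𝟙 S) := by
  refine ⟨?_, ?_, ?_, hGetPut⟩
  · rw [hPutPut]
    have : (prod.associator S V V).hom ≫ prod.map (𝟙 S) prod.snd
        = prod.map (prod.fst : S ⨯ V ⟶ S) (𝟙 V) := by
      apply Limits.prod.hom_ext <;> simp [prod.lift_fst, prod.lift_snd]
    rw [← Category.assoc, this]
  · apply Limits.prod.hom_ext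
    · apply Limits.prod.hom_ext <;> simp [diag, prod.lift_fst, prod.lift_snd]
    · simp [diag, prod.lift_fst, prod.lift_snd]
  · have h : prod.map (𝟙 S) (prod.lift (𝟙 V) (𝟙 V)) ≫
        prod.lift prod.fst ((prod.snd : S ⨯ V ⨯ V ⟶ _) ≫ prod.fst) = 𝟙 (S ⨯ V) := by
      apply Limits.prod.hom_ext <;> simp [prod.lift_fst, prod.lift_snd]
    apply Limits.prod.hom_ext
    · simp only [diag, Category.assoc, prod.lift_fst, Category.comp_id, prod.associator_inv,
        prod.map_fst]
      rw [prod.lift_fst_assoc, ← Category.assoc, h, Category.id_comp]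
    · simp [diag, hPutGet, prod.lift_fst, prod.lift_snd]
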